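/- Let γ > 0, let Ω ⊆ ℝ² be open, let v : ℝ² → ℝ² be twice continuously differentiable on Ω, and let ρ : ℝ → ℝ be twice differentiable with ρ''(t) ≥ 0 and 0 ≤ ρ'(t) ≤ γ for all t ∈ ℝ. For x ∈ Ω let Dv(x) denote the 2×2 Jacobian matrix of v at x, and for s ∈ {1, 2} let ∂ₛ denote the partial derivative in the s-th coordinate direction. Then for every x ∈ Ω and s ∈ {1, 2}, the matrix-valued map F(y) := ρ'(det Dv(y))·cof Dv(y) is differentiable in the direction eₛ at x and ⟨∂ₛF(x), ∂ₛ(Dv)(x)⟩ ≥ −γ·|∂ₛ(Dv)(x)|², where ⟨·,·⟩ is the Frobenius inner product and |·| the Frobenius norm. (This is the classical-derivative form of Lemma 4.2(i) of the paper.) -/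

import Mathlib

attribute [local instance] Matrix.normedAddCommGroup Matrix.normedSpace

noncomputable section

/-- The cofactor matrix of a 2×2 real matrix (transpose of the adjugate). -/
def cof (A : Matrix (Fin 2) (Fin 2) ℝ) : Matrix (Fin 2) (Fin 2) ℝ :=
  !![A 1 1, -(A 1 0); -(A 0 1), A 0 0]

/-- The Frobenius inner product of two 2×2 real matrices. -/
def frobInner (A B : Matrix (Fin 2) (Fin 2) ℝ) : ℝ :=
  ∑ i, ∑ j, A i j * B i j

/-- The Frobenius norm of a 2×2 real matrix. -/
def frobNorm (A : Matrix (Fin 2) (Fin 2) ℝ) : ℝ :=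
  Real.sqrt (frobInner A A)

/-- The Jacobian matrix `(Dv(y))ᵢⱼ = ∂ⱼvᵢ(y)` of a map `v : ℝ² → ℝ²`. -/
def jacobian (v : EuclideanSpace ℝ (Fin 2) → EuclideanSpace ℝ (Fin 2))
    (y : EuclideanSpace ℝ (Fin 2)) : Matrix (Fin 2) (Fin 2) ℝ :=
  Matrix.of fun i j => fderiv ℝ v y (EuclideanSpace.single j 1) i

set_option maxHeartbeats 2000000 in
/-- Classical-derivative form of Lemma 4.2(i) of the paper: for `v` of class `C²`
on an open set `Ω ⊆ ℝ²` and `ρ : ℝ → ℝ` twice differentiable, convex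
(`ρ'' ≥ 0`) with `0 ≤ ρ' ≤ γ`, the map `F(y) = ρ'(det Dv(y))·cof Dv(y)` is
differentiable at every `x ∈ Ω` in each coordinate direction `eₛ`, and
`⟨∂ₛF(x), ∂ₛ(Dv)(x)⟩ ≥ −γ·|∂ₛ(Dv)(x)|²`. -/
theorem lineDeriv_rho_cof_lower_bound
    (γ : ℝ) (hγ : 0 < γ)
    (Ω : Set (EuclideanSpace ℝ (Fin 2))) (hΩ : IsOpen Ω)
    (v : EuclideanSpace ℝ (Fin 2) → EuclideanSpace ℝ (Fin 2))
    (hv : ContDiffOn ℝ 2 v Ω)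
    (ρ ρ' ρ'' : ℝ → ℝ)
    (hρ' : ∀ t, HasDerivAt ρ (ρ' t) t)
    (hρ'' : ∀ t, HasDerivAt ρ' (ρ'' t) t)
    (hconv : ∀ t, 0 ≤ ρ'' t)
    (hρ'_nonneg : ∀ t, 0 ≤ ρ' t) (hρ'_le : ∀ t, ρ' t ≤ γ) :
    ∀ x ∈ Ω, ∀ s : Fin 2,
      LineDifferentiableAt ℝ
        (fun y => ρ' ((jacobian v y).det) • cof (jacobian v y)) x
        (EuclideanSpace.single s 1) ∧
      frobInner
        (lineDeriv ℝ
          (fun y => ρ' ((jacobian v y).det) • cof (jacobian v y)) x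
          (EuclideanSpace.single s 1))
        (lineDeriv ℝ (jacobian v) x (EuclideanSpace.single s 1))
      ≥ -γ * (frobNorm (lineDeriv ℝ (jacobian v) x (EuclideanSpace.single s 1))) ^ 2 := by
  intro x hx s
  set u : EuclideanSpace ℝ (Fin 2) := EuclideanSpace.single s 1 with hu
  have hvx : ContDiffAt ℝ 2 v x := hv.contDiffAt (hΩ.mem_nhds hx)
  have hd : DifferentiableAt ℝ (fderiv ℝ v) x :=
    (hvx.fderiv_right (m := 1) (by norm_num)).differentiableAt one_ne_zero
  have hW : HasFDerivAt (fderiv ℝ v) (fderiv ℝ (fderiv ℝ v) x) x := hd.hasFDerivAt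
  set W := fderiv ℝ (fderiv ℝ v) x with hWdef
  have hℓ : HasDerivAt (fun t : ℝ => x + t • u) u 0 := by
    simpa using ((hasDerivAt_id (0:ℝ)).smul_const u).const_add x
  set H : Matrix (Fin 2) (Fin 2) ℝ :=
    Matrix.of fun i j => W u (EuclideanSpace.single j 1) i with hHdef
  -- entrywise derivative of the Jacobian along the line
  have ent : ∀ i j : Fin 2, HasDerivAt
      (fun t : ℝ => fderiv ℝ v (x + t • u) (EuclideanSpace.single j 1) i) (H i j) 0 := by
    intro i j
    set φ : (EuclideanSpace ℝ (Fin 2) →L[ℝ] EuclideanSpace ℝ (Fin 2)) →L[ℝ] ℝ :=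
      (EuclideanSpace.proj i).comp
        (ContinuousLinearMap.apply ℝ (EuclideanSpace ℝ (Fin 2)) (EuclideanSpace.single j 1))
    have h1 : HasFDerivAt (fun y => fderiv ℝ v y (EuclideanSpace.single j 1) i)
        (φ.comp W) ((fun t : ℝ => x + t • u) 0) := by
      have h1' := φ.hasFDerivAt.comp x hW
      simp only [zero_smul, add_zero]
      exact h1'
    exact h1.comp_hasDerivAt 0 hℓ
  have hm : HasDerivAt (fun t : ℝ => jacobian v (x + t • u)) H 0 :=
    hasDerivAt_pi.2 fun i => hasDerivAt_pi.2 fun j => ent i j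
  have hLH : lineDeriv ℝ (jacobian v) x u = H :=
    HasLineDerivAt.lineDeriv (𝕜 := ℝ) hm
  -- derivative of the determinant along the line
  set A : Matrix (Fin 2) (Fin 2) ℝ := jacobian v (x + (0:ℝ) • u) with hAdef
  set c : ℝ := H 0 0 * A 1 1 + A 0 0 * H 1 1 - (H 0 1 * A 1 0 + A 0 1 * H 1 0) with hcdef
  have hdet : HasDerivAt (fun t : ℝ => (jacobian v (x + t • u)).det) c 0 := by
    have h := ((ent 0 0).mul (ent 1 1)).sub ((ent 0 1).mul (ent 1 0))
    simp only [Matrix.det_fin_two]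
    exact h
  set d : ℝ := A.det with hddef
  have hb : HasDerivAt (fun t : ℝ => ρ' ((jacobian v (x + t • u)).det)) (ρ'' d * c) 0 :=
    (hρ'' d).comp (0:ℝ) hdet
  set r : ℝ := ρ'' d * c with hrdef
  set p : ℝ := ρ' d with hpdef
  set K : Matrix (Fin 2) (Fin 2) ℝ :=
    !![r * A 1 1 + p * H 1 1, r * (-(A 1 0)) + p * (-(H 1 0));
       r * (-(A 0 1)) + p * (-(H 0 1)), r * A 0 0 + p * H 0 0] with hKdef
  have e00 : HasDerivAt (fun t : ℝ =>
      ρ' ((jacobian v (x + t • u)).det) * (jacobian v (x + t • u) 1 1))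
      (r * A 1 1 + p * H 1 1) 0 := hb.mul (ent 1 1)
  have e01 : HasDerivAt (fun t : ℝ =>
      ρ' ((jacobian v (x + t • u)).det) * (-(jacobian v (x + t • u) 1 0)))
      (r * (-(A 1 0)) + p * (-(H 1 0))) 0 := hb.mul (ent 1 0).neg
  have e10 : HasDerivAt (fun t : ℝ =>
      ρ' ((jacobian v (x + t • u)).det) * (-(jacobian v (x + t • u) 0 1)))
      (r * (-(A 0 1)) + p * (-(H 0 1))) 0 := hb.mul (ent 0 1).neg
  have e11 : HasDerivAt (fun t : ℝ =>
      ρ' ((jacobian v (x + t • u)).det) * (jacobian v (x + t • u) 0 0))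
      (r * A 0 0 + p * H 0 0) 0 := hb.mul (ent 0 0)
  have hK : HasDerivAt
      (fun t : ℝ => ρ' ((jacobian v (x + t • u)).det) • cof (jacobian v (x + t • u))) K 0 := by
    apply hasDerivAt_pi.2; intro i
    apply hasDerivAt_pi.2; intro j
    fin_cases i <;> fin_cases j
    · exact e00
    · exact e01
    · exact e10
    · exact e11
  have hdiff : LineDifferentiableAt ℝ
      (fun y => ρ' ((jacobian v y).det) • cof (jacobian v y)) x u :=
    hK.differentiableAt
  have hLK : lineDeriv ℝ
      (fun y => ρ' ((jacobian v y).det) • cof (jacobian v y)) x u = K :=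
    HasLineDerivAt.lineDeriv (𝕜 := ℝ) hK
  refine ⟨hdiff, ?_⟩
  rw [hLK, hLH]
  have hpos : (0:ℝ) ≤ frobInner H H := by
    simp only [frobInner, Fin.sum_univ_two]
    nlinarith [mul_self_nonneg (H 0 0), mul_self_nonneg (H 0 1), mul_self_nonneg (H 1 0),
      mul_self_nonneg (H 1 1)]
  have hsq : (frobNorm H) ^ 2 = frobInner H H := Real.sq_sqrt hpos
  rw [hsq]
  simp only [frobInner, Fin.sum_univ_two, hKdef, Matrix.of_apply,
    Matrix.cons_val', Matrix.cons_val_zero, Matrix.cons_val_one, Matrix.head_cons,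
    Matrix.head_fin_const, Matrix.empty_val', Matrix.cons_val_fin_one, Fin.isValue]
  have h0 : 0 ≤ ρ'' d := hconv d
  have hp0 : 0 ≤ p := hρ'_nonneg d
  have hpγ : p ≤ γ := hρ'_le d
  have h1 : 0 ≤ p * ((H 0 0 + H 1 1)^2 + (H 0 1 - H 1 0)^2) := by positivity
  have h2 : p * (H 0 0^2 + H 0 1^2 + H 1 0^2 + H 1 1^2)
      ≤ γ * (H 0 0^2 + H 0 1^2 + H 1 0^2 + H 1 1^2) := by
    apply mul_le_mul_of_nonneg_right hpγ; positivity
  have h3 : 0 ≤ ρ'' d *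
      (H 0 0 * A 1 1 + A 0 0 * H 1 1 - (H 0 1 * A 1 0 + A 0 1 * H 1 0)) ^ 2 :=
    mul_nonneg h0 (sq_nonneg _)
  rw [hrdef, hcdef]
  nlinarith [h1, h2, h3]
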